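/- arXiv:2204.06168 — 12 statements merged into one kernel-verified Lean document; each statement's English description precedes it below -/
import Mathlib

section
/- Let s ∈ [0,1] be a real number, let d > 0 and let t be a real number with t ≤ 0 or t > 1. Let λ, L, A⁻, A⁺, B⁻, B⁺ be real numbers such that: if t ≤ 0 then B⁻ = (A⁻ − λ)·d/(1−t) and B⁺ = (A⁺ − λ)·d/(1−t), while if t > 1 then B⁻ = (A⁺ − λ)·d/(−t) and B⁺ = (A⁻ − λ)·d/(−t). If B⁻ < 0, B⁺ > 0, and B⁻ ≤ L ≤ B⁺, then A⁻ ≤ λ + ((s − t)/d)·L ≤ A⁺. -/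
/-- Single-step induction lemma (Lemma 3.1) of the ENO-based DBI framework,
combining both cases t ≤ 0 and t > 1. -/
theorem dbi_step (s d t lam L Aminus Aplus Bminus Bplus : ℝ)
    (hs0 : 0 ≤ s) (hs1 : s ≤ 1) (hd : 0 < d) (ht : t ≤ 0 ∨ 1 < t)
    (hBminus_le : t ≤ 0 → Bminus = (Aminus - lam) * d / (1 - t))
    (hBplus_le : t ≤ 0 → Bplus = (Aplus - lam) * d / (1 - t))
    (hBminus_gt : 1 < t → Bminus = (Aplus - lam) * d / (-t))
    (hBplus_gt : 1 < t → Bplus = (Aminus - lam) * d / (-t))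
    (hBmneg : Bminus < 0) (hBppos : 0 < Bplus)
    (hL1 : Bminus ≤ L) (hL2 : L ≤ Bplus) :
    Aminus ≤ lam + ((s - t) / d) * L ∧ lam + ((s - t) / d) * L ≤ Aplus := by
  have hd' : d ≠ 0 := ne_of_gt hd
  rcases ht with ht | ht
  · have h1t : (0:ℝ) < 1 - t := by linarith
    have hA1 : Aminus = lam + (1 - t) / d * Bminus := by
      rw [hBminus_le ht]; field_simp; ring
    have hA2 : Aplus = lam + (1 - t) / d * Bplus := by
      rw [hBplus_le ht]; field_simp; ring
    have hc0 : 0 ≤ (s - t) / d := div_nonneg (by linarith) hd.le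
    have hc1 : (s - t) / d ≤ (1 - t) / d := by gcongr
    constructor
    · rw [hA1]
      have h1 : (s - t) / d * Bminus ≤ (s - t) / d * L :=
        mul_le_mul_of_nonneg_left hL1 hc0
      have h2 : (1 - t) / d * Bminus ≤ (s - t) / d * Bminus :=
        mul_le_mul_of_nonpos_right hc1 (le_of_lt hBmneg)
      linarith
    · rw [hA2]
      have h1 : (s - t) / d * L ≤ (s - t) / d * Bplus :=
        mul_le_mul_of_nonneg_left hL2 hc0
      have h2 : (s - t) / d * Bplus ≤ (1 - t) / d * Bplus :=
        mul_le_mul_of_nonneg_right hc1 (le_of_lt hBppos)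
      linarith
  · have htp : (0:ℝ) < t := by linarith
    have hA1 : Aplus = lam + (-t) / d * Bminus := by
      rw [hBminus_gt ht]; field_simp; ring
    have hA2 : Aminus = lam + (-t) / d * Bplus := by
      rw [hBplus_gt ht]; field_simp; ring
    have hc0 : (s - t) / d ≤ 0 :=
      div_nonpos_of_nonpos_of_nonneg (by linarith) hd.le
    have hc1 : (-t) / d ≤ (s - t) / d := by gcongr ; linarith
    constructor
    · rw [hA2]
      have h1 : (s - t) / d * Bplus ≤ (s - t) / d * L :=
        mul_le_mul_of_nonpos_left hL2 hc0
      have h2 : (-t) / d * Bplus ≤ (s - t) / d * Bplus :=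
        mul_le_mul_of_nonneg_right hc1 (le_of_lt hBppos)
      linarith
    · rw [hA1]
      have h1 : (s - t) / d * L ≤ (s - t) / d * Bminus :=
        mul_le_mul_of_nonpos_left hL1 hc0
      have h2 : (s - t) / d * Bminus ≤ (-t) / d * Bminus :=
        mul_le_mul_of_nonpos_right hc1 (le_of_lt hBmneg)
      linarith
end

section
/- Let s ∈ [0,1] be a real number, let d > 0 and let t ≤ 0 be real numbers. Let λ, L, A⁻, A⁺ be real numbers and set B⁻ = (A⁻ − λ)·d/(1−t) and B⁺ = (A⁺ − λ)·d/(1−t). If B⁻ < 0, B⁺ > 0, and B⁻ ≤ L ≤ B⁺, then A⁻ ≤ λ + ((s − t)/d)·L ≤ A⁺. -/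
/-- Case I (t ≤ 0) of the single-step induction lemma (Lemma 3.1) of the DBI framework. -/
theorem dbi_step_left (s d t lam L Aminus Aplus : ℝ)
    (hs0 : 0 ≤ s) (hs1 : s ≤ 1) (hd : 0 < d) (ht : t ≤ 0)
    (hBmneg : (Aminus - lam) * d / (1 - t) < 0)
    (hBppos : 0 < (Aplus - lam) * d / (1 - t))
    (hL1 : (Aminus - lam) * d / (1 - t) ≤ L)
    (hL2 : L ≤ (Aplus - lam) * d / (1 - t)) :
    Aminus ≤ lam + ((s - t) / d) * L ∧ lam + ((s - t) / d) * L ≤ Aplus := by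
  have h1t : 0 < 1 - t := by linarith
  have hm : (Aminus - lam) * d < 0 := by
    have := mul_pos (neg_pos.mpr hBmneg) h1t
    nlinarith [div_mul_cancel₀ ((Aminus - lam) * d) h1t.ne']
  have hp : 0 < (Aplus - lam) * d := by
    nlinarith [div_mul_cancel₀ ((Aplus - lam) * d) h1t.ne']
  have hL1' : (Aminus - lam) * d ≤ L * (1 - t) := by
    have := mul_le_mul_of_nonneg_right hL1 h1t.le
    rwa [div_mul_cancel₀ _ h1t.ne'] at this
  have hL2' : L * (1 - t) ≤ (Aplus - lam) * d := by
    have := mul_le_mul_of_nonneg_right hL2 h1t.le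
    rwa [div_mul_cancel₀ _ h1t.ne'] at this
  have hst : 0 ≤ s - t := by linarith
  have key1 : (Aminus - lam) * d ≤ (s - t) * L := by
    rcases le_or_gt 0 L with h | h
    · nlinarith
    · nlinarith
  have key2 : (s - t) * L ≤ (Aplus - lam) * d := by
    rcases le_or_gt 0 L with h | h
    · nlinarith
    · nlinarith
  constructor
  · have : Aminus - lam ≤ (s - t) / d * L := by
      rw [div_mul_eq_mul_div, le_div_iff₀ hd]
      linarith
    linarith
  · have : (s - t) / d * L ≤ Aplus - lam := by
      rw [div_mul_eq_mul_div, div_le_iff₀ hd]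
      linarith
    linarith
end

section
/- Let s ∈ [0,1] be a real number, let d > 0 and let t > 1 be real numbers. Let λ, L, A⁻, A⁺ be real numbers and set B⁻ = (A⁺ − λ)·d/(−t) and B⁺ = (A⁻ − λ)·d/(−t). If B⁻ < 0, B⁺ > 0, and B⁻ ≤ L ≤ B⁺, then A⁻ ≤ λ + ((s − t)/d)·L ≤ A⁺. -/
/-- Case II (t > 1) of the single-step induction lemma (Lemma 3.1) of the DBI framework. -/
theorem dbi_step_right (s d t lam L Aminus Aplus : ℝ)
    (hs0 : 0 ≤ s) (hs1 : s ≤ 1) (hd : 0 < d) (ht : 1 < t)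
    (hBmneg : (Aplus - lam) * d / (-t) < 0)
    (hBppos : 0 < (Aminus - lam) * d / (-t))
    (hL1 : (Aplus - lam) * d / (-t) ≤ L)
    (hL2 : L ≤ (Aminus - lam) * d / (-t)) :
    Aminus ≤ lam + ((s - t) / d) * L ∧ lam + ((s - t) / d) * L ≤ Aplus := by
  have hnt : -t < 0 := by linarith
  have hL1' : L * (-t) ≤ (Aplus - lam) * d := (div_le_iff_of_neg hnt).mp hL1
  have hL2' : (Aminus - lam) * d ≤ L * (-t) := (le_div_iff_of_neg hnt).mp hL2
  have hAp : 0 < (Aplus - lam) * d := by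
    have := (div_lt_iff_of_neg hnt).mp hBmneg; linarith
  have hAm : (Aminus - lam) * d < 0 := by
    have := (lt_div_iff_of_neg hnt).mp hBppos; linarith
  constructor
  · rw [div_mul_eq_mul_div, ← sub_le_iff_le_add', le_div_iff₀ hd]
    rcases le_or_gt 0 L with h | h
    · nlinarith
    · nlinarith
  · rw [div_mul_eq_mul_div, ← le_sub_iff_add_le', div_le_iff₀ hd]
    rcases le_or_gt 0 L with h | h
    · nlinarith
    · nlinarith
end

section
/- Let n ≥ 2 be an integer and s ∈ [0,1] a real number. Let d_1, …, d_{n−1} be positive reals, let t_2, …, t_{n−1} be reals each satisfying t_j ≤ 0 or t_j > 1, and let λ̄_1, …, λ̄_{n−1} be reals. Define B_1⁻ = −d_1, B_1⁺ = d_1, and for 2 ≤ j ≤ n−1: if t_j ≤ 0 then B_j⁻ = (B_{j−1}⁻ − λ̄_{j−1})·d_j/(1−t_j) and B_j⁺ = (B_{j−1}⁺ − λ̄_{j−1})·d_j/(1−t_j); if t_j > 1 then B_j⁻ = (B_{j−1}⁺ − λ̄_{j−1})·d_j/(−t_j) and B_j⁺ = (B_{j−1}⁻ − λ̄_{j−1})·d_j/(−t_j).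 Define Q_n = λ̄_{n−1} and, for j = n−1 down to 2, Q_j = λ̄_{j−1} + ((s − t_j)/d_j)·Q_{j+1}, and set S = s + (s(s−1)/d_1)·Q_2. If B_j⁻ < 0, B_j⁺ > 0, and B_j⁻ ≤ λ̄_j ≤ B_j⁺ for every 1 ≤ j ≤ n−1, then 0 ≤ S ≤ 1. -/
/-- Main data-bounded interpolation (DBI) theorem (Theorem 3.1):
if the scaled divided-difference products λ̄_j satisfy the recursively defined
bounds B_j⁻ ≤ λ̄_j ≤ B_j⁺ (with B_j⁻ < 0 < B_j⁺), then the nested form S of the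
Newton interpolant satisfies 0 ≤ S ≤ 1. -/
theorem dbi_main (n : ℕ) (hn : 2 ≤ n) (s : ℝ) (hs0 : 0 ≤ s) (hs1 : s ≤ 1)
    (d t lam Bminus Bplus Q : ℕ → ℝ)
    (hd : ∀ j, 1 ≤ j → j ≤ n - 1 → 0 < d j)
    (ht : ∀ j, 2 ≤ j → j ≤ n - 1 → t j ≤ 0 ∨ 1 < t j)
    (hBm1 : Bminus 1 = -d 1) (hBp1 : Bplus 1 = d 1)
    (hBrec_le : ∀ j, 2 ≤ j → j ≤ n - 1 → t j ≤ 0 →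
      Bminus j = (Bminus (j - 1) - lam (j - 1)) * d j / (1 - t j) ∧
      Bplus j = (Bplus (j - 1) - lam (j - 1)) * d j / (1 - t j))
    (hBrec_gt : ∀ j, 2 ≤ j → j ≤ n - 1 → 1 < t j →
      Bminus j = (Bplus (j - 1) - lam (j - 1)) * d j / (-t j) ∧
      Bplus j = (Bminus (j - 1) - lam (j - 1)) * d j / (-t j))
    (hQn : Q n = lam (n - 1))
    (hQ : ∀ j, 2 ≤ j → j ≤ n - 1 → Q j = lam (j - 1) + ((s - t j) / d j) * Q (j + 1))
    (hB : ∀ j, 1 ≤ j → j ≤ n - 1 →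
      Bminus j < 0 ∧ 0 < Bplus j ∧ Bminus j ≤ lam j ∧ lam j ≤ Bplus j) :
    0 ≤ s + (s * (s - 1) / d 1) * Q 2 ∧ s + (s * (s - 1) / d 1) * Q 2 ≤ 1 := by
  have key : ∀ m j, 2 ≤ j → j + m = n → Bminus (j - 1) ≤ Q j ∧ Q j ≤ Bplus (j - 1) := by
    intro m
    induction m with
    | zero =>
      intro j hj hjn
      simp only [Nat.add_zero] at hjn
      subst hjn
      obtain ⟨_, _, h1, h2⟩ := hB (j - 1) (by omega) (by omega)
      rw [hQn]
      exact ⟨h1, h2⟩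
    | succ k ih =>
      intro j hj hjn
      have hjn1 : j ≤ n - 1 := by omega
      obtain ⟨hQl, hQu⟩ := ih (j + 1) (by omega) (by omega)
      simp only [Nat.add_sub_cancel] at hQl hQu
      have hQj := hQ j hj hjn1
      have hdj := hd j (by omega) hjn1
      obtain ⟨hBmj, hBpj, _, _⟩ := hB j (by omega) hjn1
      have expand : lam (j - 1) + (s - t j) / d j * Q (j + 1)
          = (lam (j - 1) * d j + (s - t j) * Q (j + 1)) / d j := by
        field_simp
      rw [hQj, expand]
      rcases ht j hj hjn1 with htj | htj
      · obtain ⟨hm, hp⟩ := hBrec_le j hj hjn1 htj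
        have h1t : (0:ℝ) < 1 - t j := by linarith
        have hm' : Bminus (j - 1) * d j = Bminus j * (1 - t j) + lam (j - 1) * d j := by
          rw [hm]; field_simp; ring
        have hp' : Bplus (j - 1) * d j = Bplus j * (1 - t j) + lam (j - 1) * d j := by
          rw [hp]; field_simp; ring
        have hst : 0 ≤ s - t j := by linarith
        constructor
        · rw [le_div_iff₀ hdj]
          nlinarith [mul_le_mul_of_nonneg_left hQl hst,
            mul_nonpos_of_nonneg_of_nonpos (by linarith : (0:ℝ) ≤ 1 - s) hBmj.le]
        · rw [div_le_iff₀ hdj]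
          nlinarith [mul_le_mul_of_nonneg_left hQu hst,
            mul_nonneg (by linarith : (0:ℝ) ≤ 1 - s) hBpj.le]
      · obtain ⟨hm, hp⟩ := hBrec_gt j hj hjn1 htj
        have htj0 : (0:ℝ) < t j := by linarith
        have hm' : Bminus (j - 1) * d j = Bplus j * (-t j) + lam (j - 1) * d j := by
          rw [hp]; field_simp; ring
        have hp' : Bplus (j - 1) * d j = Bminus j * (-t j) + lam (j - 1) * d j := by
          rw [hm]; field_simp; ring
        have hst : s - t j ≤ 0 := by linarith
        constructor
        · rw [le_div_iff₀ hdj]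
          nlinarith [mul_le_mul_of_nonpos_left hQu hst,
            mul_nonneg hs0 hBpj.le]
        · rw [div_le_iff₀ hdj]
          nlinarith [mul_le_mul_of_nonpos_left hQl hst,
            mul_nonpos_of_nonneg_of_nonpos hs0 hBmj.le]
  obtain ⟨hQ2l, hQ2u⟩ := key (n - 2) 2 le_rfl (by omega)
  have hd1 := hd 1 le_rfl (by omega)
  simp only [show (2:ℕ) - 1 = 1 from rfl, hBm1, hBp1] at hQ2l hQ2u
  have hss : s * (s - 1) ≤ 0 := mul_nonpos_of_nonneg_of_nonpos hs0 (by linarith)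
  constructor
  · have : (s * (s - 1) / d 1) * Q 2 ≥ (s * (s - 1) / d 1) * d 1 := by
      apply mul_le_mul_of_nonpos_left hQ2u
      exact div_nonpos_of_nonpos_of_nonneg hss hd1.le
    have h2 : (s * (s - 1) / d 1) * d 1 = s * (s - 1) := by field_simp
    nlinarith
  · have : (s * (s - 1) / d 1) * Q 2 ≤ (s * (s - 1) / d 1) * (-d 1) := by
      apply mul_le_mul_of_nonpos_left hQ2l
      exact div_nonpos_of_nonpos_of_nonneg hss hd1.le
    have h2 : (s * (s - 1) / d 1) * (-d 1) = -(s * (s - 1)) := by field_simp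
    nlinarith
end

section
/- Let n ≥ 2 be an integer, s ∈ [0,1] a real number, and let m_ℓ ≤ 0 and m_r ≥ 1 be reals. Let d_1, …, d_{n−1} be positive reals, let t_2, …, t_{n−1} be reals each satisfying t_j ≤ 0 or t_j > 1, and let λ̄_1, …, λ̄_{n−1} be reals. Define B_1⁻ = (−4(m_r − 1) − 1)·d_1, B_1⁺ = (−4·m_ℓ + 1)·d_1, and for 2 ≤ j ≤ n−1: if t_j ≤ 0 then B_j⁻ = (B_{j−1}⁻ − λ̄_{j−1})·d_j/(1−t_j) and B_j⁺ = (B_{j−1}⁺ − λ̄_{j−1})·d_j/(1−t_j); if t_j > 1 then B_j⁻ = (B_{j−1}⁺ − λ̄_{j−1})·d_j/(−t_j) and B_j⁺ = (B_{j−1}⁻ − λ̄_{j−1})·d_j/(−t_j). Define Q_n = λ̄_{n−1} and, for j = n−1 down to 2, Q_j = λ̄_{j−1} + ((s − t_j)/d_j)·Q_{j+1}, and set S = s + (s(s−1)/d_1)·Q_2. If B_j⁻ < 0, B_j⁺ > 0, and B_j⁻ ≤ λ̄_j ≤ B_j⁺ for every 1 ≤ j ≤ n−1, then m_ℓ ≤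 S ≤ m_r. -/
set_option maxHeartbeats 1000000 in
/-- Main constrained positivity-preserving interpolation (PPI) theorem (Theorem 4.1):
with the relaxed starting bounds B_1⁻ = (−4(m_r−1)−1)d_1, B_1⁺ = (−4m_ℓ+1)d_1,
if B_j⁻ ≤ λ̄_j ≤ B_j⁺ (with B_j⁻ < 0 < B_j⁺), then m_ℓ ≤ S ≤ m_r for the nested
form S of the Newton interpolant. -/
theorem ppi_main (n : ℕ) (hn : 2 ≤ n) (s : ℝ) (hs0 : 0 ≤ s) (hs1 : s ≤ 1)
    (ml mr : ℝ) (hml : ml ≤ 0) (hmr : 1 ≤ mr)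
    (d t lam Bminus Bplus Q : ℕ → ℝ)
    (hd : ∀ j, 1 ≤ j → j ≤ n - 1 → 0 < d j)
    (ht : ∀ j, 2 ≤ j → j ≤ n - 1 → t j ≤ 0 ∨ 1 < t j)
    (hBm1 : Bminus 1 = (-4 * (mr - 1) - 1) * d 1)
    (hBp1 : Bplus 1 = (-4 * ml + 1) * d 1)
    (hBrec_le : ∀ j, 2 ≤ j → j ≤ n - 1 → t j ≤ 0 →
      Bminus j = (Bminus (j - 1) - lam (j - 1)) * d j / (1 - t j) ∧
      Bplus j = (Bplus (j - 1) - lam (j - 1)) * d j / (1 - t j))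
    (hBrec_gt : ∀ j, 2 ≤ j → j ≤ n - 1 → 1 < t j →
      Bminus j = (Bplus (j - 1) - lam (j - 1)) * d j / (-t j) ∧
      Bplus j = (Bminus (j - 1) - lam (j - 1)) * d j / (-t j))
    (hQn : Q n = lam (n - 1))
    (hQ : ∀ j, 2 ≤ j → j ≤ n - 1 → Q j = lam (j - 1) + ((s - t j) / d j) * Q (j + 1))
    (hB : ∀ j, 1 ≤ j → j ≤ n - 1 →
      Bminus j < 0 ∧ 0 < Bplus j ∧ Bminus j ≤ lam j ∧ lam j ≤ Bplus j) :
    ml ≤ s + (s * (s - 1) / d 1) * Q 2 ∧ s + (s * (s - 1) / d 1) * Q 2 ≤ mr := by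
  -- Key backward induction: Bminus (j-1) ≤ Q j ≤ Bplus (j-1) for 2 ≤ j ≤ n
  have key : ∀ m : ℕ, ∀ j, 2 ≤ j → j ≤ n → n - j = m →
      Bminus (j - 1) ≤ Q j ∧ Q j ≤ Bplus (j - 1) := by
    intro m
    induction m with
    | zero =>
      intro j h2 hjn hm
      have hjeq : j = n := by omega
      subst hjeq
      rw [hQn]
      obtain ⟨_, _, h3, h4⟩ := hB (j - 1) (by omega) (by omega)
      exact ⟨h3, h4⟩
    | succ k ih =>
      intro j h2 hjn hm
      have hj : j ≤ n - 1 := by omega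
      have hQj := hQ j h2 hj
      have ihj := ih (j + 1) (by omega) (by omega) (by omega)
      have hsub : j + 1 - 1 = j := rfl
      rw [hsub] at ihj
      obtain ⟨ih1, ih2⟩ := ihj
      obtain ⟨hBjm, hBjp, _, _⟩ := hB j (by omega) hj
      have hdj := hd j (by omega) hj
      have hdj' : d j ≠ 0 := ne_of_gt hdj
      rcases ht j h2 hj with htle | htgt
      · obtain ⟨e1, e2⟩ := hBrec_le j h2 hj htle
        have h1t : (0:ℝ) < 1 - t j := by linarith
        have E1 : Bminus j * (1 - t j) = (Bminus (j - 1) - lam (j - 1)) * d j := by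
          rw [e1]; field_simp
        have E2 : Bplus j * (1 - t j) = (Bplus (j - 1) - lam (j - 1)) * d j := by
          rw [e2]; field_simp
        have E3 : Q j * d j = lam (j - 1) * d j + (s - t j) * Q (j + 1) := by
          rw [hQj]; field_simp
        constructor
        · have hkey : 0 ≤ (Q j - Bminus (j - 1)) * d j := by
            nlinarith [E1, E3, mul_nonneg (by linarith : (0:ℝ) ≤ s - t j) (by linarith : (0:ℝ) ≤ Q (j+1) - Bminus j),
              mul_nonneg (by linarith : (0:ℝ) ≤ 1 - s) (by linarith : (0:ℝ) ≤ -Bminus j)]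
          have := (mul_nonneg_iff_of_pos_right hdj).mp hkey
          linarith
        · have hkey : 0 ≤ (Bplus (j - 1) - Q j) * d j := by
            nlinarith [E2, E3, mul_nonneg (by linarith : (0:ℝ) ≤ s - t j) (by linarith : (0:ℝ) ≤ Bplus j - Q (j+1)),
              mul_nonneg (by linarith : (0:ℝ) ≤ 1 - s) (le_of_lt hBjp)]
          have := (mul_nonneg_iff_of_pos_right hdj).mp hkey
          linarith
      · obtain ⟨e1, e2⟩ := hBrec_gt j h2 hj htgt
        have htn : (0:ℝ) < t j := by linarith
        have E1 : Bminus j * (-t j) = (Bplus (j - 1) - lam (j - 1)) * d j := by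
          rw [e1]; field_simp
        have E2 : Bplus j * (-t j) = (Bminus (j - 1) - lam (j - 1)) * d j := by
          rw [e2]; field_simp
        have E3 : Q j * d j = lam (j - 1) * d j + (s - t j) * Q (j + 1) := by
          rw [hQj]; field_simp
        constructor
        · have hkey : 0 ≤ (Q j - Bminus (j - 1)) * d j := by
            nlinarith [E2, E3, mul_nonneg (by linarith : (0:ℝ) ≤ t j - s) (by linarith : (0:ℝ) ≤ Bplus j - Q (j+1)),
              mul_nonneg hs0 (le_of_lt hBjp)]
          have := (mul_nonneg_iff_of_pos_right hdj).mp hkey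
          linarith
        · have hkey : 0 ≤ (Bplus (j - 1) - Q j) * d j := by
            nlinarith [E1, E3, mul_nonneg (by linarith : (0:ℝ) ≤ t j - s) (by linarith : (0:ℝ) ≤ Q (j+1) - Bminus j),
              mul_nonneg hs0 (by linarith : (0:ℝ) ≤ -Bminus j)]
          have := (mul_nonneg_iff_of_pos_right hdj).mp hkey
          linarith
  have h2n : (2:ℕ) ≤ n := hn
  obtain ⟨hQ2l, hQ2u⟩ := key (n - 2) 2 le_rfl hn (by omega)
  have hd1 := hd 1 le_rfl (by omega)
  set c := s * (s - 1) / d 1 with hcdef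
  have hc : c * d 1 = s * (s - 1) := div_mul_cancel₀ _ (ne_of_gt hd1)
  have hcle : c ≤ 0 := by
    apply div_nonpos_of_nonpos_of_nonneg
    · nlinarith
    · exact le_of_lt hd1
  rw [hBm1] at hQ2l
  rw [hBp1] at hQ2u
  constructor
  · -- lower bound
    have h1 : c * Bplus 1 ≤ c * Q 2 := by
      rw [hBp1]
      exact mul_le_mul_of_nonpos_left (by rw [hBp1] at *; exact hQ2u) hcle
    have h2 : c * Bplus 1 = (-4 * ml + 1) * (s * (s - 1)) := by
      rw [hBp1]
      calc c * ((-4 * ml + 1) * d 1) = (-4 * ml + 1) * (c * d 1) := by ring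
        _ = (-4 * ml + 1) * (s * (s - 1)) := by rw [hc]
    rw [h2] at h1
    nlinarith [mul_nonpos_of_nonpos_of_nonneg hml (sq_nonneg (2 * s - 1)), sq_nonneg s]
  · -- upper bound
    have h1 : c * Q 2 ≤ c * Bminus 1 := by
      rw [hBm1]
      exact mul_le_mul_of_nonpos_left (by rw [hBm1] at *; exact hQ2l) hcle
    have h2 : c * Bminus 1 = (-4 * (mr - 1) - 1) * (s * (s - 1)) := by
      rw [hBm1]
      calc c * ((-4 * (mr - 1) - 1) * d 1) = (-4 * (mr - 1) - 1) * (c * d 1) := by ring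
        _ = (-4 * (mr - 1) - 1) * (s * (s - 1)) := by rw [hc]
    rw [h2] at h1
    nlinarith [mul_nonneg (by linarith : (0:ℝ) ≤ mr - 1) (sq_nonneg (1 - 2 * s)), sq_nonneg (1 - s)]
end

section
/- Let d > 0, let m_ℓ ≤ 0 and m_r ≥ 1 be reals, and let λ be a real number with (−4(m_r − 1) − 1)·d ≤ λ ≤ (−4·m_ℓ + 1)·d. Then for every s ∈ [0,1], m_ℓ ≤ s + (s(s−1)/d)·λ ≤ m_r. -/
/-- Quadratic base case of the PPI construction: the relaxed bound on λ̄_1 implies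
m_ℓ ≤ s + (s(s−1)/d)·λ ≤ m_r for all s ∈ [0,1]. -/
theorem ppi_quadratic (d ml mr lam : ℝ) (hd : 0 < d) (hml : ml ≤ 0) (hmr : 1 ≤ mr)
    (h1 : (-4 * (mr - 1) - 1) * d ≤ lam) (h2 : lam ≤ (-4 * ml + 1) * d) :
    ∀ s : ℝ, 0 ≤ s → s ≤ 1 →
      ml ≤ s + (s * (s - 1) / d) * lam ∧ s + (s * (s - 1) / d) * lam ≤ mr := by
  intro s hs0 hs1
  have heq : s + (s * (s - 1) / d) * lam = (s * d + s * (s - 1) * lam) / d := by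
    field_simp
  have hs1' : (0:ℝ) ≤ 1 - s := by linarith
  have e1 : 0 ≤ s * (1 - s) * (lam - (-4 * (mr - 1) - 1) * d) :=
    mul_nonneg (mul_nonneg hs0 hs1') (by linarith)
  have e2 : 0 ≤ s * (1 - s) * ((-4 * ml + 1) * d - lam) :=
    mul_nonneg (mul_nonneg hs0 hs1') (by linarith)
  constructor
  · rw [heq, le_div_iff₀ hd]
    nlinarith [e2, mul_nonneg (neg_nonneg.mpr hml) (sq_nonneg (2*s - 1)),
      mul_nonneg hd.le (sq_nonneg s), sq_nonneg s, hd.le]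
  · rw [heq, div_le_iff₀ hd]
    nlinarith [e1, mul_nonneg (by linarith : (0:ℝ) ≤ mr - 1) (sq_nonneg (2*s - 1)),
      mul_nonneg hd.le (sq_nonneg (1 - s)), hd.le]
end

section
/- Let d_1, d_2 > 0, let t_2 ≤ 0, and let λ̄_1, λ̄_2 be real numbers such that −d_1 ≤ λ̄_1 ≤ d_1 and (d_2/(1−t_2))·(−d_1 − λ̄_1) ≤ λ̄_2 ≤ (d_2/(1−t_2))·(d_1 − λ̄_1). Then for every s ∈ [0,1], −d_1 ≤ λ̄_1 + ((s − t_2)/d_2)·λ̄_2 ≤ d_1. -/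
/-- Cubic step of the DBI construction, stencil point added to the left (t₂ ≤ 0). -/
theorem dbi_cubic_left (d1 d2 t2 lam1 lam2 : ℝ)
    (hd1 : 0 < d1) (hd2 : 0 < d2) (ht2 : t2 ≤ 0)
    (h1 : -d1 ≤ lam1) (h2 : lam1 ≤ d1)
    (h3 : d2 / (1 - t2) * (-d1 - lam1) ≤ lam2)
    (h4 : lam2 ≤ d2 / (1 - t2) * (d1 - lam1)) :
    ∀ s : ℝ, 0 ≤ s → s ≤ 1 →
      -d1 ≤ lam1 + ((s - t2) / d2) * lam2 ∧ lam1 + ((s - t2) / d2) * lam2 ≤ d1 := by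
  intro s hs0 hs1
  have ht : (0:ℝ) < 1 - t2 := by linarith
  have key3 : d2 * (-d1 - lam1) ≤ lam2 * (1 - t2) := by
    rw [div_mul_eq_mul_div, div_le_iff₀ ht] at h3; exact h3
  have key4 : lam2 * (1 - t2) ≤ d2 * (d1 - lam1) := by
    rw [div_mul_eq_mul_div, le_div_iff₀ ht] at h4; exact h4
  have heq : lam1 + ((s - t2) / d2) * lam2 = (lam1 * d2 + (s - t2) * lam2) / d2 := by
    field_simp
  have hst0 : 0 ≤ s - t2 := by linarith
  have hst1 : s - t2 ≤ 1 - t2 := by linarith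
  rw [heq]
  constructor
  · rw [le_div_iff₀ hd2]
    rcases le_or_gt 0 lam2 with hp | hn
    · nlinarith [mul_nonneg hst0 hp]
    · nlinarith [mul_le_mul_of_nonpos_right hst1 hn.le]
  · rw [div_le_iff₀ hd2]
    rcases le_or_gt 0 lam2 with hp | hn
    · nlinarith [mul_le_mul_of_nonneg_right hst1 hp]
    · nlinarith [mul_nonpos_of_nonneg_of_nonpos hst0 hn.le]
end

section
/- Let d_1, d_2 > 0, let t_2 > 1, and let λ̄_1, λ̄_2 be real numbers such that −d_1 ≤ λ̄_1 ≤ d_1 and (d_2/(−t_2))·(d_1 − λ̄_1) ≤ λ̄_2 ≤ (d_2/(−t_2))·(−d_1 − λ̄_1). Then for every s ∈ [0,1], −d_1 ≤ λ̄_1 + ((s − t_2)/d_2)·λ̄_2 ≤ d_1. -/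
/-- Cubic step of the DBI construction, stencil point added to the right (t₂ > 1). -/
theorem dbi_cubic_right (d1 d2 t2 lam1 lam2 : ℝ)
    (hd1 : 0 < d1) (hd2 : 0 < d2) (ht2 : 1 < t2)
    (h1 : -d1 ≤ lam1) (h2 : lam1 ≤ d1)
    (h3 : d2 / (-t2) * (d1 - lam1) ≤ lam2)
    (h4 : lam2 ≤ d2 / (-t2) * (-d1 - lam1)) :
    ∀ s : ℝ, 0 ≤ s → s ≤ 1 →
      -d1 ≤ lam1 + ((s - t2) / d2) * lam2 ∧ lam1 + ((s - t2) / d2) * lam2 ≤ d1 := by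
  intro s hs0 hs1
  have ht0 : 0 < t2 := by linarith
  have hA : d2 / (-t2) * (d1 - lam1) = -(d2 * (d1 - lam1)) / t2 := by
    field_simp [ht0.ne']
  have hB : d2 / (-t2) * (-d1 - lam1) = d2 * (d1 + lam1) / t2 := by
    field_simp [ht0.ne']; ring
  rw [hA, div_le_iff₀ ht0] at h3
  rw [hB, le_div_iff₀ ht0] at h4
  -- h3 : -(d2 * (d1 - lam1)) ≤ lam2 * t2
  -- h4 : lam2 * t2 ≤ d2 * (d1 + lam1)
  have key : lam1 + ((s - t2) / d2) * lam2 = lam1 + (s - t2) * (lam2 * t2) / (d2 * t2) := by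
    field_simp [ht0.ne']
  have hdt : 0 < d2 * t2 := mul_pos hd2 ht0
  rw [key]
  constructor
  · have H : (-d1 - lam1) * (d2 * t2) ≤ (s - t2) * (lam2 * t2) := by
      nlinarith [mul_nonneg (show (0:ℝ) ≤ t2 - s by linarith)
          (show (0:ℝ) ≤ d2 * (d1 + lam1) - lam2 * t2 by linarith),
        mul_nonneg hs0 (mul_nonneg hd2.le (show (0:ℝ) ≤ d1 + lam1 by linarith))]
    have := (le_div_iff₀ hdt).mpr H
    linarith
  · have H : (s - t2) * (lam2 * t2) ≤ (d1 - lam1) * (d2 * t2) := by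
      nlinarith [mul_nonneg (show (0:ℝ) ≤ t2 - s by linarith)
          (show (0:ℝ) ≤ lam2 * t2 + d2 * (d1 - lam1) by linarith),
        mul_nonneg hs0 (mul_nonneg hd2.le (show (0:ℝ) ≤ d1 - lam1 by linarith))]
    have := (div_le_iff₀ hdt).mpr H
    linarith
end

section
/- Let d_1, d_2, d_3 > 0, let t_2 ≤ 0 and t_3 ≤ 0, and let λ̄_1, λ̄_2, λ̄_3 be real numbers with −d_1 ≤ λ̄_1 ≤ d_1. Set B_2⁻ = (d_2/(1−t_2))·(−d_1 − λ̄_1), B_2⁺ = (d_2/(1−t_2))·(d_1 − λ̄_1), B_3⁻ = (B_2⁻ − λ̄_2)·d_3/(1−t_3), and B_3⁺ = (B_2⁺ − λ̄_2)·d_3/(1−t_3). If B_2⁻ ≤ λ̄_2 ≤ B_2⁺ and B_3⁻ ≤ λ̄_3 ≤ B_3⁺, then for every s ∈ [0,1], B_2⁻ ≤ λ̄_2 + ((s − t_3)/d_3)·λ̄_3 ≤ B_2⁺. -/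
/-- Quartic step of the DBI construction with both stencil points added to the left
(t₂ ≤ 0 and t₃ ≤ 0). -/
theorem dbi_quartic_left (d1 d2 d3 t2 t3 lam1 lam2 lam3 : ℝ)
    (hd1 : 0 < d1) (hd2 : 0 < d2) (hd3 : 0 < d3) (ht2 : t2 ≤ 0) (ht3 : t3 ≤ 0)
    (h1 : -d1 ≤ lam1) (h2 : lam1 ≤ d1)
    (hB2m : d2 / (1 - t2) * (-d1 - lam1) ≤ lam2)
    (hB2p : lam2 ≤ d2 / (1 - t2) * (d1 - lam1))
    (hB3m : (d2 / (1 - t2) * (-d1 - lam1) - lam2) * d3 / (1 - t3) ≤ lam3)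
    (hB3p : lam3 ≤ (d2 / (1 - t2) * (d1 - lam1) - lam2) * d3 / (1 - t3)) :
    ∀ s : ℝ, 0 ≤ s → s ≤ 1 →
      d2 / (1 - t2) * (-d1 - lam1) ≤ lam2 + ((s - t3) / d3) * lam3 ∧
      lam2 + ((s - t3) / d3) * lam3 ≤ d2 / (1 - t2) * (d1 - lam1) := by
  intro s hs0 hs1
  have ht3' : (0:ℝ) < 1 - t3 := by linarith
  have hst : 0 ≤ s - t3 := by linarith
  have hu : 0 ≤ (s - t3) / d3 := div_nonneg hst hd3.le
  have hk0 : 0 ≤ (s - t3) / (1 - t3) := div_nonneg hst ht3'.le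
  have hk1 : (s - t3) / (1 - t3) ≤ 1 := by
    rw [div_le_one ht3']; linarith
  have em : (s - t3) / d3 * ((d2 / (1 - t2) * (-d1 - lam1) - lam2) * d3 / (1 - t3))
      = (d2 / (1 - t2) * (-d1 - lam1) - lam2) * ((s - t3) / (1 - t3)) := by
    field_simp
  have ep : (s - t3) / d3 * ((d2 / (1 - t2) * (d1 - lam1) - lam2) * d3 / (1 - t3))
      = (d2 / (1 - t2) * (d1 - lam1) - lam2) * ((s - t3) / (1 - t3)) := by
    field_simp
  constructor
  · have h := mul_le_mul_of_nonneg_left hB3m hu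
    rw [em] at h
    nlinarith [mul_le_mul_of_nonneg_right (sub_nonneg.mpr hB2m) (sub_nonneg.mpr hk1)]
  · have h := mul_le_mul_of_nonneg_left hB3p hu
    rw [ep] at h
    nlinarith [mul_le_mul_of_nonneg_right (sub_nonneg.mpr hB2p) (sub_nonneg.mpr hk1)]
end

section
/- Let d > 0, let s ∈ [0,1], and let L, m_ℓ, m_r be real numbers. (i) If m_r ≥ 1 and L ≥ (−4(m_r − 1) − 1)·d, then s + (s(s−1)/d)·L ≤ m_r. (ii) If m_ℓ ≤ 0 and L ≤ (−4·m_ℓ + 1)·d, then s + (s(s−1)/d)·L ≥ m_ℓ. -/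
/-- Final step in the proof of the PPI theorem. -/
theorem ppi_final (d s L ml mr : ℝ) (hd : 0 < d) (hs0 : 0 ≤ s) (hs1 : s ≤ 1) :
    (1 ≤ mr → (-4 * (mr - 1) - 1) * d ≤ L → s + (s * (s - 1) / d) * L ≤ mr) ∧
    (ml ≤ 0 → L ≤ (-4 * ml + 1) * d → ml ≤ s + (s * (s - 1) / d) * L) := by
  have hq0 : s * (s - 1) ≤ 0 := mul_nonpos_of_nonneg_of_nonpos hs0 (by linarith)
  have hq1 : -(1/4 : ℝ) ≤ s * (s - 1) := by nlinarith [sq_nonneg (s - 1/2)]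
  have heq : (s * (s - 1) / d) * L = s * (s - 1) * (L / d) := by ring
  constructor
  · intro hmr hL
    have hLd : -4 * (mr - 1) - 1 ≤ L / d := (le_div_iff₀ hd).mpr hL
    have h2 := mul_le_mul_of_nonpos_left hLd hq0
    rw [heq]; nlinarith
  · intro hml hL
    have hLd : L / d ≤ -4 * ml + 1 := (div_le_iff₀ hd).mpr hL
    have h2 := mul_le_mul_of_nonpos_left hLd hq0
    rw [heq]; nlinarith
end

section
/- Let n ≥ 2 be an integer, s ∈ [0,1] a real number, and u_i, u_{i+1} real numbers. Let d_1, …, d_{n−1} be positive reals, let t_2, …, t_{n−1} be reals each satisfying t_j ≤ 0 or t_j > 1, and let λ̄_1, …, λ̄_{n−1} be reals. Define B_1⁻ = −d_1, B_1⁺ = d_1, and for 2 ≤ j ≤ n−1: if t_j ≤ 0 then B_j⁻ = (B_{j−1}⁻ − λ̄_{j−1})·d_j/(1−t_j) and B_j⁺ = (B_{j−1}⁺ − λ̄_{j−1})·d_j/(1−t_j); if t_j > 1 then B_j⁻ = (B_{j−1}⁺ − λ̄_{j−1})·d_j/(−t_j) and B_j⁺ = (B_{j−1}⁻ − λ̄_{j−1})·d_j/(−t_j).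 Define Q_n = λ̄_{n−1} and, for j = n−1 down to 2, Q_j = λ̄_{j−1} + ((s − t_j)/d_j)·Q_{j+1}, and set U = u_i + (u_{i+1} − u_i)·(s + (s(s−1)/d_1)·Q_2). If B_j⁻ < 0, B_j⁺ > 0, and B_j⁻ ≤ λ̄_j ≤ B_j⁺ for every 1 ≤ j ≤ n−1, then min(u_i, u_{i+1}) ≤ U ≤ max(u_i, u_{i+1}). -/
/-- Data-boundedness consequence of the main DBI theorem: the degree-n Newton
interpolant U = u_i + (u_{i+1} − u_i)·S_n is bounded by the data values. -/
theorem dbi_data_bounded (n : ℕ) (hn : 2 ≤ n) (s : ℝ) (hs0 : 0 ≤ s) (hs1 : s ≤ 1)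
    (ui ui1 : ℝ)
    (d t lam Bminus Bplus Q : ℕ → ℝ)
    (hd : ∀ j, 1 ≤ j → j ≤ n - 1 → 0 < d j)
    (ht : ∀ j, 2 ≤ j → j ≤ n - 1 → t j ≤ 0 ∨ 1 < t j)
    (hBm1 : Bminus 1 = -d 1) (hBp1 : Bplus 1 = d 1)
    (hBrec_le : ∀ j, 2 ≤ j → j ≤ n - 1 → t j ≤ 0 →
      Bminus j = (Bminus (j - 1) - lam (j - 1)) * d j / (1 - t j) ∧
      Bplus j = (Bplus (j - 1) - lam (j - 1)) * d j / (1 - t j))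
    (hBrec_gt : ∀ j, 2 ≤ j → j ≤ n - 1 → 1 < t j →
      Bminus j = (Bplus (j - 1) - lam (j - 1)) * d j / (-t j) ∧
      Bplus j = (Bminus (j - 1) - lam (j - 1)) * d j / (-t j))
    (hQn : Q n = lam (n - 1))
    (hQ : ∀ j, 2 ≤ j → j ≤ n - 1 → Q j = lam (j - 1) + ((s - t j) / d j) * Q (j + 1))
    (hB : ∀ j, 1 ≤ j → j ≤ n - 1 →
      Bminus j < 0 ∧ 0 < Bplus j ∧ Bminus j ≤ lam j ∧ lam j ≤ Bplus j) :
    min ui ui1 ≤ ui + (ui1 - ui) * (s + (s * (s - 1) / d 1) * Q 2) ∧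
      ui + (ui1 - ui) * (s + (s * (s - 1) / d 1) * Q 2) ≤ max ui ui1 := by
  have hn1 : 1 ≤ n - 1 := by omega
  have key : ∀ m j, 1 ≤ j → j ≤ n - 1 → n - 1 - j = m →
      Bminus j ≤ Q (j + 1) ∧ Q (j + 1) ≤ Bplus j := by
    intro m
    induction m with
    | zero =>
      intro j hj1 hj2 hm
      have hj : j = n - 1 := by omega
      have hQj : Q (j + 1) = lam j := by
        subst hj
        have h1 : n - 1 + 1 = n := by omega
        rw [h1, hQn]
      obtain ⟨_, _, h3, h4⟩ := hB j hj1 hj2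
      rw [hQj]; exact ⟨h3, h4⟩
    | succ m ih =>
      intro j hj1 hj2 hm
      have hj2' : j + 1 ≤ n - 1 := by omega
      obtain ⟨ih1, ih2⟩ := ih (j + 1) (by omega) hj2' (by omega)
      have hQj : Q (j + 1) = lam j + ((s - t (j + 1)) / d (j + 1)) * Q (j + 2) := by
        have h := hQ (j + 1) (by omega) hj2'
        simpa using h
      obtain ⟨hBm, hBp, hl1, hl2⟩ := hB j hj1 hj2
      obtain ⟨hBm', hBp', _, _⟩ := hB (j + 1) (by omega) hj2'
      have hdj : 0 < d (j + 1) := hd (j + 1) (by omega) hj2'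
      rcases ht (j + 1) (by omega) hj2' with htle | htgt
      · obtain ⟨e1, e2⟩ := hBrec_le (j + 1) (by omega) hj2' htle
        simp only [Nat.add_sub_cancel] at e1 e2
        have h1t : (0:ℝ) < 1 - t (j + 1) := by linarith
        have hr0 : 0 ≤ (s - t (j + 1)) / d (j + 1) := by
          apply div_nonneg (by linarith) hdj.le
        have hr1 : (s - t (j + 1)) / d (j + 1) ≤ (1 - t (j + 1)) / d (j + 1) := by
          exact div_le_div_of_nonneg_right (by linarith) hdj.le
        have he1 : ((1 - t (j + 1)) / d (j + 1)) * Bminus (j + 1) = Bminus j - lam j := by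
          rw [e1]; field_simp; try ring
        have he2 : ((1 - t (j + 1)) / d (j + 1)) * Bplus (j + 1) = Bplus j - lam j := by
          rw [e2]; field_simp; try ring
        have hA1 : ((s - t (j + 1)) / d (j + 1)) * Bminus (j + 1) ≤
            ((s - t (j + 1)) / d (j + 1)) * Q (j + 2) :=
          mul_le_mul_of_nonneg_left ih1 hr0
        have hA2 : ((1 - t (j + 1)) / d (j + 1)) * Bminus (j + 1) ≤
            ((s - t (j + 1)) / d (j + 1)) * Bminus (j + 1) :=
          mul_le_mul_of_nonpos_right hr1 hBm'.le
        have hA3 : ((s - t (j + 1)) / d (j + 1)) * Q (j + 2) ≤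
            ((s - t (j + 1)) / d (j + 1)) * Bplus (j + 1) :=
          mul_le_mul_of_nonneg_left ih2 hr0
        have hA4 : ((s - t (j + 1)) / d (j + 1)) * Bplus (j + 1) ≤
            ((1 - t (j + 1)) / d (j + 1)) * Bplus (j + 1) :=
          mul_le_mul_of_nonneg_right hr1 hBp'.le
        rw [hQj]
        constructor <;> linarith
      · obtain ⟨e1, e2⟩ := hBrec_gt (j + 1) (by omega) hj2' htgt
        simp only [Nat.add_sub_cancel] at e1 e2
        have htp : (0:ℝ) < t (j + 1) := by linarith
        have hr1 : (s - t (j + 1)) / d (j + 1) ≤ 0 := by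
          apply div_nonpos_of_nonpos_of_nonneg (by linarith) hdj.le
        have hr2 : (-t (j + 1)) / d (j + 1) ≤ (s - t (j + 1)) / d (j + 1) := by
          exact div_le_div_of_nonneg_right (by linarith) hdj.le
        have he1 : ((-t (j + 1)) / d (j + 1)) * Bplus (j + 1) = Bminus j - lam j := by
          rw [e2]; field_simp; try ring
        have he2 : ((-t (j + 1)) / d (j + 1)) * Bminus (j + 1) = Bplus j - lam j := by
          rw [e1]; field_simp; try ring
        have hA1 : ((s - t (j + 1)) / d (j + 1)) * Bplus (j + 1) ≤
            ((s - t (j + 1)) / d (j + 1)) * Q (j + 2) :=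
          mul_le_mul_of_nonpos_left ih2 hr1
        have hA2 : ((-t (j + 1)) / d (j + 1)) * Bplus (j + 1) ≤
            ((s - t (j + 1)) / d (j + 1)) * Bplus (j + 1) :=
          mul_le_mul_of_nonneg_right hr2 hBp'.le
        have hA3 : ((s - t (j + 1)) / d (j + 1)) * Q (j + 2) ≤
            ((s - t (j + 1)) / d (j + 1)) * Bminus (j + 1) :=
          mul_le_mul_of_nonpos_left ih1 hr1
        have hA4 : ((s - t (j + 1)) / d (j + 1)) * Bminus (j + 1) ≤
            ((-t (j + 1)) / d (j + 1)) * Bminus (j + 1) :=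
          mul_le_mul_of_nonpos_right hr2 hBm'.le
        rw [hQj]
        constructor <;> linarith
  obtain ⟨hQ2l, hQ2u⟩ := key (n - 1 - 1) 1 le_rfl hn1 rfl
  rw [hBm1] at hQ2l; rw [hBp1] at hQ2u
  have hd1 : 0 < d 1 := hd 1 le_rfl hn1
  have hrw : s + (s * (s - 1) / d 1) * Q 2 = (s * d 1 + s * (s - 1) * Q 2) / d 1 := by
    field_simp; try ring
  have hS0 : 0 ≤ s + (s * (s - 1) / d 1) * Q 2 := by
    rw [hrw]
    apply div_nonneg _ hd1.le
    nlinarith [mul_nonneg (mul_nonneg hs0 (by linarith : (0:ℝ) ≤ 1 - s))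
      (by linarith : (0:ℝ) ≤ d 1 - Q 2), mul_nonneg (mul_nonneg hs0 hs0) hd1.le]
  have hS1 : s + (s * (s - 1) / d 1) * Q 2 ≤ 1 := by
    rw [hrw, div_le_one hd1]
    nlinarith [mul_nonneg (mul_nonneg hs0 (by linarith : (0:ℝ) ≤ 1 - s))
      (by linarith : (0:ℝ) ≤ Q 2 + d 1),
      mul_nonneg (mul_nonneg (by linarith : (0:ℝ) ≤ 1 - s) (by linarith : (0:ℝ) ≤ 1 - s)) hd1.le]
  rcases le_total ui ui1 with h | h
  · rw [min_eq_left h, max_eq_right h]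
    constructor
    · nlinarith [mul_nonneg (by linarith : (0:ℝ) ≤ ui1 - ui) hS0]
    · nlinarith [mul_nonneg (by linarith : (0:ℝ) ≤ ui1 - ui)
        (by linarith : (0:ℝ) ≤ 1 - (s + (s * (s - 1) / d 1) * Q 2))]
  · rw [min_eq_right h, max_eq_left h]
    constructor
    · nlinarith [mul_nonneg (by linarith : (0:ℝ) ≤ ui - ui1)
        (by linarith : (0:ℝ) ≤ 1 - (s + (s * (s - 1) / d 1) * Q 2))]
    · nlinarith [mul_nonneg (by linarith : (0:ℝ) ≤ ui - ui1) hS0]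
end

section
/- Let n ≥ 2 be an integer, s ∈ [0,1] a real number, and u_i, u_{i+1}, u_min, u_max real numbers with u_i ≠ u_{i+1}, u_min ≤ min(u_i, u_{i+1}), and u_max ≥ max(u_i, u_{i+1}). If u_{i+1} > u_i, set m_ℓ = min(0, (u_min − u_i)/(u_{i+1} − u_i)) and m_r = max(1, (u_max − u_i)/(u_{i+1} − u_i)); if u_{i+1} < u_i, set m_ℓ = min(0, (u_max − u_i)/(u_{i+1} − u_i)) and m_r = max(1, (u_min − u_i)/(u_{i+1} − u_i)). Let d_1, …, d_{n−1} be positive reals, let t_2, …, t_{n−1} be reals each satisfying t_j ≤ 0 or t_j > 1, and let λ̄_1, …, λ̄_{n−1} be reals. Define B_1⁻ = (−4(m_r − 1) − 1)·d_1, B_1⁺ = (−4·m_ℓ + 1)·d_1, and for 2 ≤ j ≤ n−1: if t_j ≤ 0 then B_j⁻ = (B_{j−1}⁻ − λ̄_{j−1})·d_j/(1−t_j) and B_j⁺ = (B_{j−1}⁺ − λ̄_{j−1})·d_j/(1−t_j); if t_j > 1 then B_j⁻ = (B_{j−1}⁺ − λ̄_{j−1})·d_j/(−t_j) and B_j⁺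 = (B_{j−1}⁻ − λ̄_{j−1})·d_j/(−t_j). Define Q_n = λ̄_{n−1} and, for j = n−1 down to 2, Q_j = λ̄_{j−1} + ((s − t_j)/d_j)·Q_{j+1}, and set U = u_i + (u_{i+1} − u_i)·(s + (s(s−1)/d_1)·Q_2). If B_j⁻ < 0, B_j⁺ > 0, and B_j⁻ ≤ λ̄_j ≤ B_j⁺ for every 1 ≤ j ≤ n−1, then u_min ≤ U ≤ u_max. -/
set_option maxHeartbeats 1600000 in
/-- Constrained-positivity consequence of the main PPI theorem: the degree-n Newton
interpolant U = u_i + (u_{i+1} − u_i)·S_n obeys the user-supplied constraints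
u_min ≤ U ≤ u_max. -/
theorem ppi_constrained (n : ℕ) (hn : 2 ≤ n) (s : ℝ) (hs0 : 0 ≤ s) (hs1 : s ≤ 1)
    (ui ui1 umin umax ml mr : ℝ)
    (hne : ui ≠ ui1) (hmin : umin ≤ min ui ui1) (hmax : max ui ui1 ≤ umax)
    (hml_gt : ui < ui1 → ml = min 0 ((umin - ui) / (ui1 - ui)))
    (hmr_gt : ui < ui1 → mr = max 1 ((umax - ui) / (ui1 - ui)))
    (hml_lt : ui1 < ui → ml = min 0 ((umax - ui) / (ui1 - ui)))
    (hmr_lt : ui1 < ui → mr = max 1 ((umin - ui) / (ui1 - ui)))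
    (d t lam Bminus Bplus Q : ℕ → ℝ)
    (hd : ∀ j, 1 ≤ j → j ≤ n - 1 → 0 < d j)
    (ht : ∀ j, 2 ≤ j → j ≤ n - 1 → t j ≤ 0 ∨ 1 < t j)
    (hBm1 : Bminus 1 = (-4 * (mr - 1) - 1) * d 1)
    (hBp1 : Bplus 1 = (-4 * ml + 1) * d 1)
    (hBrec_le : ∀ j, 2 ≤ j → j ≤ n - 1 → t j ≤ 0 →
      Bminus j = (Bminus (j - 1) - lam (j - 1)) * d j / (1 - t j) ∧
      Bplus j = (Bplus (j - 1) - lam (j - 1)) * d j / (1 - t j))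
    (hBrec_gt : ∀ j, 2 ≤ j → j ≤ n - 1 → 1 < t j →
      Bminus j = (Bplus (j - 1) - lam (j - 1)) * d j / (-t j) ∧
      Bplus j = (Bminus (j - 1) - lam (j - 1)) * d j / (-t j))
    (hQn : Q n = lam (n - 1))
    (hQ : ∀ j, 2 ≤ j → j ≤ n - 1 → Q j = lam (j - 1) + ((s - t j) / d j) * Q (j + 1))
    (hB : ∀ j, 1 ≤ j → j ≤ n - 1 →
      Bminus j < 0 ∧ 0 < Bplus j ∧ Bminus j ≤ lam j ∧ lam j ≤ Bplus j) :
    umin ≤ ui + (ui1 - ui) * (s + (s * (s - 1) / d 1) * Q 2) ∧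
      ui + (ui1 - ui) * (s + (s * (s - 1) / d 1) * Q 2) ≤ umax := by
  have hn1 : 1 ≤ n - 1 := by omega
  have hd1 : 0 < d 1 := hd 1 le_rfl hn1
  -- ml ≤ 0 and 1 ≤ mr
  have hml0 : ml ≤ 0 := by
    rcases lt_or_gt_of_ne hne with h | h
    · rw [hml_gt h]; exact min_le_left _ _
    · rw [hml_lt h]; exact min_le_left _ _
  have hmr1 : 1 ≤ mr := by
    rcases lt_or_gt_of_ne hne with h | h
    · rw [hmr_gt h]; exact le_max_left _ _
    · rw [hmr_lt h]; exact le_max_left _ _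
  -- key downward induction
  have key : ∀ k j, j + k = n → 2 ≤ j →
      Bminus (j - 1) ≤ Q j ∧ Q j ≤ Bplus (j - 1) := by
    intro k
    induction k with
    | zero =>
      intro j hj h2
      have hjn : j = n := by omega
      subst hjn
      have h := hB (j - 1) (by omega) le_rfl
      rw [hQn]
      exact ⟨h.2.2.1, h.2.2.2⟩
    | succ k ih =>
      intro j hj h2
      have hjle : j ≤ n - 1 := by omega
      have ihj := ih (j + 1) (by omega) (by omega)
      simp only [Nat.add_sub_cancel] at ihj
      obtain ⟨hq1, hq2⟩ := ihj
      have hQj := hQ j h2 hjle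
      obtain ⟨hbm, hbp, _, _⟩ := hB j (by omega) hjle
      have hdj := hd j (by omega) hjle
      rcases ht j h2 hjle with htj | htj
      · obtain ⟨e1, e2⟩ := hBrec_le j h2 hjle htj
        have h1t : (0:ℝ) < 1 - t j := by linarith
        have f1 : Bminus j * (1 - t j) = (Bminus (j - 1) - lam (j - 1)) * d j := by
          rw [e1]; field_simp
        have f2 : Bplus j * (1 - t j) = (Bplus (j - 1) - lam (j - 1)) * d j := by
          rw [e2]; field_simp
        rw [hQj]
        constructor
        · rw [← sub_le_iff_le_add', div_mul_eq_mul_div, le_div_iff₀ hdj]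
          nlinarith [mul_nonneg (by linarith : (0:ℝ) ≤ s - t j) (by linarith : (0:ℝ) ≤ Q (j+1) - Bminus j),
            mul_nonneg (by linarith : (0:ℝ) ≤ 1 - s) (by linarith : (0:ℝ) ≤ -Bminus j)]
        · rw [← le_sub_iff_add_le', div_mul_eq_mul_div, div_le_iff₀ hdj]
          nlinarith [mul_nonneg (by linarith : (0:ℝ) ≤ s - t j) (by linarith : (0:ℝ) ≤ Bplus j - Q (j+1)),
            mul_nonneg (by linarith : (0:ℝ) ≤ 1 - s) (by linarith : (0:ℝ) ≤ Bplus j)]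
      · obtain ⟨e1, e2⟩ := hBrec_gt j h2 hjle htj
        have h1t : t j ≠ 0 := by positivity
        have f1 : Bminus j * (-t j) = (Bplus (j - 1) - lam (j - 1)) * d j := by
          rw [e1]; field_simp
        have f2 : Bplus j * (-t j) = (Bminus (j - 1) - lam (j - 1)) * d j := by
          rw [e2]; field_simp
        rw [hQj]
        constructor
        · rw [← sub_le_iff_le_add', div_mul_eq_mul_div, le_div_iff₀ hdj]
          nlinarith [mul_nonneg (by linarith : (0:ℝ) ≤ t j - s) (by linarith : (0:ℝ) ≤ Bplus j - Q (j+1)),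
            mul_nonneg hs0 (by linarith : (0:ℝ) ≤ Bplus j)]
        · rw [← le_sub_iff_add_le', div_mul_eq_mul_div, div_le_iff₀ hdj]
          nlinarith [mul_nonneg (by linarith : (0:ℝ) ≤ t j - s) (by linarith : (0:ℝ) ≤ Q (j+1) - Bminus j),
            mul_nonneg hs0 (by linarith : (0:ℝ) ≤ -Bminus j)]
  have hQ2 := key (n - 2) 2 (by omega) le_rfl
  norm_num at hQ2
  obtain ⟨hq1, hq2⟩ := hQ2
  -- bounds on S := s + (s*(s-1)/d 1) * Q 2
  have hc : s * (s - 1) / d 1 ≤ 0 :=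
    div_nonpos_of_nonpos_of_nonneg (by nlinarith) hd1.le
  have hS_le : s + (s * (s - 1) / d 1) * Q 2 ≤ mr := by
    have h1 : (s * (s - 1) / d 1) * Q 2 ≤ (s * (s - 1) / d 1) * Bminus 1 :=
      mul_le_mul_of_nonpos_left hq1 hc
    have h2 : (s * (s - 1) / d 1) * Bminus 1 = s * (s - 1) * (-4 * (mr - 1) - 1) := by
      rw [hBm1]; field_simp
    rw [h2] at h1
    nlinarith [sq_nonneg (1 - s), mul_nonneg (by linarith : (0:ℝ) ≤ mr - 1) (sq_nonneg (1 - 2*s))]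
  have hS_ge : ml ≤ s + (s * (s - 1) / d 1) * Q 2 := by
    have h1 : (s * (s - 1) / d 1) * Bplus 1 ≤ (s * (s - 1) / d 1) * Q 2 :=
      mul_le_mul_of_nonpos_left hq2 hc
    have h2 : (s * (s - 1) / d 1) * Bplus 1 = s * (s - 1) * (-4 * ml + 1) := by
      rw [hBp1]; field_simp
    rw [h2] at h1
    nlinarith [sq_nonneg s, mul_nonneg (by linarith : (0:ℝ) ≤ -ml) (sq_nonneg (1 - 2*s))]
  set S := s + (s * (s - 1) / d 1) * Q 2 with hS
  rcases lt_or_gt_of_ne hne with h | h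
  · have hD : (0:ℝ) < ui1 - ui := by linarith
    have hminui : umin ≤ ui := le_trans hmin (min_le_left _ _)
    have hmaxui : ui1 ≤ umax := le_trans (le_max_right _ _) hmax
    have hml' : ml = (umin - ui) / (ui1 - ui) := by
      rw [hml_gt h]
      exact min_eq_right (div_nonpos_of_nonpos_of_nonneg (by linarith) hD.le)
    have hmr' : mr = (umax - ui) / (ui1 - ui) := by
      rw [hmr_gt h]
      exact max_eq_right ((le_div_iff₀ hD).mpr (by linarith))
    rw [hml'] at hS_ge
    rw [hmr'] at hS_le
    constructor
    · have := (div_le_iff₀ hD).mp hS_ge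
      linarith
    · have := (le_div_iff₀ hD).mp hS_le
      linarith
  · have hD : ui1 - ui < 0 := by linarith
    have hminui : umin ≤ ui1 := le_trans hmin (min_le_right _ _)
    have hmaxui : ui ≤ umax := le_trans (le_max_left _ _) hmax
    have hml' : ml = (umax - ui) / (ui1 - ui) := by
      rw [hml_lt h]
      exact min_eq_right (div_nonpos_of_nonneg_of_nonpos (by linarith) hD.le)
    have hmr' : mr = (umin - ui) / (ui1 - ui) := by
      rw [hmr_lt h]
      exact max_eq_right ((le_div_iff_of_neg hD).mpr (by linarith))
    rw [hml'] at hS_ge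
    rw [hmr'] at hS_le
    constructor
    · have := (le_div_iff_of_neg hD).mp hS_le
      linarith
    · have := (div_le_iff_of_neg hD).mp hS_ge
      linarith
end
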